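/- (Aggregation, part ii) Suppose P* : S → 𝒫 is measurable, for ℙ-almost every s the point P*(s) maximizes P ↦ Σ_{ω,a} P(a|ω)μ(ω)v_{a,ω} + c(s,P) over 𝒫, the map s ↦ sup_{P∈𝒫}(Σ_{ω,a} P(a|ω)μ(ω)v_{a,ω} + c(s,P)) is measurable, and both ∫_S P* dℙ and ∫_S c(s,P*(s)) dℙ(s) exist and are finite. Define D̄(P) := sup{ ∫_S c(s,P'(s)) dℙ(s) : P' : S → 𝒫 measurable with ∫_S P' dℙ = P }. Then the representative-agent indirect utility equals the mean of the pointwise maximized value: sup_{P∈𝒫} [Σ_{ω,a} P(a|ω)μ(ω)v_{a,ω} + D̄(P)] = ∫_S sup_{P∈𝒫} [Σ_{ω,a} P(a|ω)μ(ω)v_{a,ω} + c(s,P)] dℙ(s). -/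

import Mathlib

open scoped BigOperators ENNReal
open MeasureTheory

noncomputable section

/-- The set `𝒫` of state-dependent stochastic choice functions, viewed as the
subset of `ℝ^{A×Ω}` of points `P` with `P(·|ω) ∈ Δ(A)` for every state `ω`. -/
def SDSCset (A Ω : Type*) [Fintype A] [Fintype Ω] : Set (A × Ω → ℝ) :=
  {P | ∀ ω : Ω, (fun a : A => P (a, ω)) ∈ stdSimplex ℝ A}

variable {A Ω : Type*} [Fintype A] [Fintype Ω]

/-- Linear part of the objective: `Σ_{ω,a} P(a|ω) μ(ω) v_{a,ω}`. -/
def linUtil (μ : Ω → ℝ) (v P : A × Ω → ℝ) : ℝ :=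
  ∑ aw : A × Ω, P aw * μ aw.2 * v aw

/-- Positive part of an extended real, as an element of `[0,∞]`. -/
def epos (x : EReal) : ℝ≥0∞ := if x = ⊤ then ⊤ else ENNReal.ofReal x.toReal

/-- Integral of an `ℝ ∪ {−∞, +∞}`-valued function: the difference of the lower
integrals of its positive and negative parts. -/
def erealIntegral {S : Type*} [MeasurableSpace S] (ℙ : Measure S) (f : S → EReal) : EReal :=
  ((∫⁻ s, epos (f s) ∂ℙ : ℝ≥0∞) : EReal) - ((∫⁻ s, epos (-(f s)) ∂ℙ : ℝ≥0∞) : EReal)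

/-- The aggregate disturbance function
`D̄(P) = sup { ∫ c(s, P'(s)) dℙ(s) : P' measurable 𝒫-valued, ∫ P' dℙ = P }`. -/
def Dbar {S : Type*} [MeasurableSpace S] (ℙ : Measure S)
    (c : S → (A × Ω → ℝ) → EReal) (P : A × Ω → ℝ) : EReal :=
  sSup {I : EReal | ∃ P' : S → A × Ω → ℝ, Measurable P' ∧
    (∀ s, P' s ∈ SDSCset A Ω) ∧ (∀ aw, ∫ s, P' s aw ∂ℙ = P aw) ∧
    I = erealIntegral ℙ (fun s => c s (P' s))}

/-! ### Auxiliary lemmas on `epos` -/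

lemma epos_coe (r : ℝ) : epos (r : EReal) = ENNReal.ofReal r := by
  simp [epos, EReal.coe_ne_top]

lemma epos_bot : epos (⊥ : EReal) = 0 := by simp [epos]

lemma epos_top : epos (⊤ : EReal) = ⊤ := by simp [epos]

lemma measurable_epos : Measurable epos := by
  unfold epos
  refine Measurable.ite ?_ measurable_const
    (ENNReal.measurable_ofReal.comp measurable_ereal_toReal)
  have : {x : EReal | x = ⊤} = {⊤} := Set.setOf_eq_eq_singleton
  rw [this]; exact measurableSet_singleton _

lemma epos_mono : Monotone epos := by
  intro x y h
  induction x using EReal.rec with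
  | bot => simp [epos_bot]
  | top => rw [top_le_iff.mp h]
  | coe a =>
    induction y using EReal.rec with
    | bot => exact absurd h (by simp)
    | top => simp [epos_top]
    | coe b =>
      rw [epos_coe, epos_coe]
      exact ENNReal.ofReal_le_ofReal (EReal.coe_le_coe_iff.mp h)

lemma ofReal_key (a b : ℝ) :
    ENNReal.ofReal (a + b) + (ENNReal.ofReal (-a) + ENNReal.ofReal (-b)) =
    ENNReal.ofReal (-(a + b)) + (ENNReal.ofReal a + ENNReal.ofReal b) := by
  have z : ∀ t : ℝ, t ≤ 0 → ENNReal.ofReal t = 0 := fun t ht => ENNReal.ofReal_eq_zero.2 ht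
  rcases le_total 0 a with ha | ha <;> rcases le_total 0 b with hb | hb <;>
    rcases le_total 0 (a + b) with hab | hab
  · rw [z (-a) (by linarith), z (-b) (by linarith), z (-(a+b)) (by linarith),
      ENNReal.ofReal_add ha hb]; simp
  · have ha0 : a = 0 := by linarith
    have hb0 : b = 0 := by linarith
    simp [ha0, hb0]
  · rw [z (-a) (by linarith), z b hb, z (-(a+b)) (by linarith)]
    simp only [zero_add, add_zero]
    rw [← ENNReal.ofReal_add hab (by linarith : (0:ℝ) ≤ -b)]
    congr 1; ring
  · rw [z (-a) (by linarith), z b hb, z (a+b) hab]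
    simp only [zero_add, add_zero]
    rw [← ENNReal.ofReal_add (by linarith : (0:ℝ) ≤ -(a+b)) ha]
    congr 1; ring
  · rw [z a ha, z (-b) (by linarith), z (-(a+b)) (by linarith)]
    simp only [zero_add, add_zero]
    rw [← ENNReal.ofReal_add hab (by linarith : (0:ℝ) ≤ -a)]
    congr 1; ring
  · rw [z a ha, z (-b) (by linarith), z (a+b) hab]
    simp only [zero_add, add_zero]
    rw [← ENNReal.ofReal_add (by linarith : (0:ℝ) ≤ -(a+b)) hb]
    congr 1; ring
  · have ha0 : a = 0 := by linarith
    have hb0 : b = 0 := by linarith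
    simp [ha0, hb0]
  · rw [z a ha, z b hb, z (a+b) hab]
    simp only [zero_add, add_zero]
    rw [← ENNReal.ofReal_add (by linarith : (0:ℝ) ≤ -a) (by linarith : (0:ℝ) ≤ -b)]
    congr 1; ring

lemma epos_key (r : ℝ) (x : EReal) :
    epos ((r : EReal) + x) + (ENNReal.ofReal (-r) + epos (-x)) =
    epos (-((r : EReal) + x)) + (ENNReal.ofReal r + epos x) := by
  induction x using EReal.rec with
  | bot => simp [epos_bot, epos_top]
  | top => simp [epos_bot, epos_top]
  | coe y =>
    rw [← EReal.coe_add, ← EReal.coe_neg, ← EReal.coe_neg, epos_coe, epos_coe, epos_coe, epos_coe]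
    exact ofReal_key r y

lemma epos_add_le (r : ℝ) (x : EReal) :
    epos ((r : EReal) + x) ≤ ENNReal.ofReal r + epos x := by
  induction x using EReal.rec with
  | bot => simp [epos_bot]
  | top => simp [epos_top]
  | coe y =>
    rw [← EReal.coe_add, epos_coe, epos_coe]
    exact ENNReal.ofReal_add_le

lemma epos_neg_add_le (r : ℝ) (x : EReal) :
    epos (-((r : EReal) + x)) ≤ ENNReal.ofReal (-r) + epos (-x) := by
  induction x using EReal.rec with
  | bot => simp [epos_top]
  | top => simp [epos_bot]
  | coe y =>
    rw [← EReal.coe_add, ← EReal.coe_neg, ← EReal.coe_neg, epos_coe, epos_coe]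
    calc ENNReal.ofReal (-(r+y)) = ENNReal.ofReal (-r + -y) := by congr 1; ring
      _ ≤ _ := ENNReal.ofReal_add_le

/-! ### EReal arithmetic helpers -/

lemma coe2 {x : ℝ≥0∞} (hx : x ≠ ⊤) : (x : EReal) = ((x.toReal : ℝ) : EReal) := by
  rw [← EReal.toReal_coe_ennreal]
  exact (EReal.coe_toReal (by simpa [EReal.coe_ennreal_eq_top_iff] using hx)
    (EReal.coe_ennreal_ne_bot _)).symm

lemma ereal_arith_fin {A B C D Gp Gm : ℝ≥0∞} (hGp : Gp ≠ ⊤) (hGm : Gm ≠ ⊤)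
    (hA : A ≠ ⊤) (hB : B ≠ ⊤) (hC : C ≠ ⊤) (hD : D ≠ ⊤)
    (star : A + (Gm + D) = B + (Gp + C)) :
    (A : EReal) - B = ((Gp.toReal - Gm.toReal : ℝ) : EReal) + ((C : EReal) - (D : EReal)) := by
  have hstar : A.toReal + (Gm.toReal + D.toReal) = B.toReal + (Gp.toReal + C.toReal) := by
    have h := congrArg ENNReal.toReal star
    rwa [ENNReal.toReal_add hA (ENNReal.add_ne_top.mpr ⟨hGm, hD⟩),
      ENNReal.toReal_add hGm hD,
      ENNReal.toReal_add hB (ENNReal.add_ne_top.mpr ⟨hGp, hC⟩),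
      ENNReal.toReal_add hGp hC] at h
  rw [coe2 hA, coe2 hB, coe2 hC, coe2 hD, ← EReal.coe_sub, ← EReal.coe_sub, ← EReal.coe_add,
    EReal.coe_eq_coe_iff]
  linarith

lemma ereal_arith {A B C D Gp Gm : ℝ≥0∞} (hGp : Gp ≠ ⊤) (hGm : Gm ≠ ⊤)
    (star : A + (Gm + D) = B + (Gp + C))
    (hAle : A ≤ Gp + C) (hBle : B ≤ Gm + D)
    (hqi : D ≠ ⊤ ∨ C ≠ ⊤) :
    (A : EReal) - B = ((Gp.toReal - Gm.toReal : ℝ) : EReal) + ((C : EReal) - (D : EReal)) := by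
  rcases eq_or_ne A ⊤ with hA | hA <;> rcases eq_or_ne B ⊤ with hB | hB
  · exfalso
    rcases hqi with hD | hC
    · exact ENNReal.add_ne_top.mpr ⟨hGm, hD⟩ (top_le_iff.mp (hB ▸ hBle))
    · exact ENNReal.add_ne_top.mpr ⟨hGp, hC⟩ (top_le_iff.mp (hA ▸ hAle))
  · have hC : C = ⊤ := by
      by_contra hC
      have : B + (Gp + C) ≠ ⊤ := ENNReal.add_ne_top.mpr ⟨hB, ENNReal.add_ne_top.mpr ⟨hGp, hC⟩⟩
      rw [← star, hA] at this
      simp at this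
    have hD : D ≠ ⊤ := hqi.resolve_right (by simpa using hC)
    rw [hA, hC, coe2 hB, coe2 hD]
    rw [EReal.coe_ennreal_top, EReal.top_sub_coe, EReal.top_sub_coe,
      EReal.add_top_of_ne_bot (EReal.coe_ne_bot _)]
  · have hD : D = ⊤ := by
      by_contra hD
      have : A + (Gm + D) ≠ ⊤ := ENNReal.add_ne_top.mpr ⟨hA, ENNReal.add_ne_top.mpr ⟨hGm, hD⟩⟩
      rw [star, hB] at this
      simp at this
    rw [hB, hD, EReal.coe_ennreal_top, EReal.sub_top, EReal.sub_top, EReal.add_bot]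
  · have hCD : C ≠ ⊤ ∧ D ≠ ⊤ := by
      rcases hqi with hD | hC
      · have : B + (Gp + C) ≠ ⊤ := by
          rw [← star]; exact ENNReal.add_ne_top.mpr ⟨hA, ENNReal.add_ne_top.mpr ⟨hGm, hD⟩⟩
        exact ⟨fun h => this (by simp [h]), hD⟩
      · have : A + (Gm + D) ≠ ⊤ := by
          rw [star]; exact ENNReal.add_ne_top.mpr ⟨hB, ENNReal.add_ne_top.mpr ⟨hGp, hC⟩⟩
        exact ⟨hC, fun h => this (by simp [h])⟩
    exact ereal_arith_fin hGp hGm hA hB hCD.1 hCD.2 star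

/-! ### Properties of `erealIntegral` -/

section ErealIntegral

variable {S : Type*} [MeasurableSpace S] {ℙ : Measure S}

lemma erealIntegral_congr_ae {f g : S → EReal} (h : f =ᵐ[ℙ] g) :
    erealIntegral ℙ f = erealIntegral ℙ g := by
  have h1 : (fun s => epos (f s)) =ᵐ[ℙ] fun s => epos (g s) :=
    h.mono fun s hs => by show epos _ = epos _; rw [hs]
  have h2 : (fun s => epos (-(f s))) =ᵐ[ℙ] fun s => epos (-(g s)) :=
    h.mono fun s hs => by show epos _ = epos _; rw [hs]
  unfold erealIntegral
  rw [lintegral_congr_ae h1, lintegral_congr_ae h2]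

lemma erealIntegral_mono {f g : S → EReal} (h : ∀ s, f s ≤ g s) :
    erealIntegral ℙ f ≤ erealIntegral ℙ g := by
  unfold erealIntegral
  refine EReal.sub_le_sub ?_ ?_
  · exact EReal.coe_ennreal_le_coe_ennreal_iff.mpr (lintegral_mono fun s => epos_mono (h s))
  · exact EReal.coe_ennreal_le_coe_ennreal_iff.mpr
      (lintegral_mono fun s => epos_mono (EReal.neg_le_neg_iff.2 (h s)))

lemma erealIntegral_add_coe {g : S → ℝ} (hgm : Measurable g) (hgi : Integrable g ℙ)
    {f : S → EReal} (hfm : Measurable f)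
    (hqi : (∫⁻ s, epos (-(f s)) ∂ℙ ≠ ⊤) ∨ (∫⁻ s, epos (f s) ∂ℙ ≠ ⊤)) :
    erealIntegral ℙ (fun s => (g s : EReal) + f s) =
      ((∫ s, g s ∂ℙ : ℝ) : EReal) + erealIntegral ℙ f := by
  have hmf : Measurable fun s => epos (f s) := measurable_epos.comp hfm
  have hmnf : Measurable fun s => epos (-(f s)) :=
    measurable_epos.comp ((continuous_neg.measurable).comp hfm)
  have hmGp : Measurable fun s => ENNReal.ofReal (g s) := ENNReal.measurable_ofReal.comp hgm
  have hmGm : Measurable fun s => ENNReal.ofReal (-(g s)) :=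
    ENNReal.measurable_ofReal.comp hgm.neg
  have star : (∫⁻ s, epos ((g s : EReal) + f s) ∂ℙ) +
      ((∫⁻ s, ENNReal.ofReal (-(g s)) ∂ℙ) + (∫⁻ s, epos (-(f s)) ∂ℙ)) =
      (∫⁻ s, epos (-((g s : EReal) + f s)) ∂ℙ) +
      ((∫⁻ s, ENNReal.ofReal (g s) ∂ℙ) + (∫⁻ s, epos (f s) ∂ℙ)) := by
    have h1 : (∫⁻ s, (epos ((g s : EReal) + f s) +
        (ENNReal.ofReal (-(g s)) + epos (-(f s)))) ∂ℙ) =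
        (∫⁻ s, (epos (-((g s : EReal) + f s)) +
        (ENNReal.ofReal (g s) + epos (f s))) ∂ℙ) :=
      lintegral_congr fun s => epos_key (g s) (f s)
    rwa [lintegral_add_right _ (show Measurable fun s => ENNReal.ofReal (-(g s)) + epos (-(f s)) from hmGm.add hmnf), lintegral_add_left hmGm,
      lintegral_add_right _ (show Measurable fun s => ENNReal.ofReal (g s) + epos (f s) from hmGp.add hmf), lintegral_add_left hmGp] at h1
  have hGp : (∫⁻ s, ENNReal.ofReal (g s) ∂ℙ) ≠ ⊤ := by
    refine ne_top_of_le_ne_top hgi.2.ne (lintegral_mono fun s => ?_)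
    calc ENNReal.ofReal (g s) ≤ ENNReal.ofReal |g s| := ENNReal.ofReal_le_ofReal (le_abs_self _)
      _ = (‖g s‖₊ : ℝ≥0∞) := (Real.enorm_eq_ofReal_abs _).symm
  have hGm : (∫⁻ s, ENNReal.ofReal (-(g s)) ∂ℙ) ≠ ⊤ := by
    refine ne_top_of_le_ne_top hgi.2.ne (lintegral_mono fun s => ?_)
    calc ENNReal.ofReal (-(g s)) ≤ ENNReal.ofReal |g s| := ENNReal.ofReal_le_ofReal (neg_le_abs _)
      _ = (‖g s‖₊ : ℝ≥0∞) := (Real.enorm_eq_ofReal_abs _).symm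
  have hAle : (∫⁻ s, epos ((g s : EReal) + f s) ∂ℙ) ≤
      (∫⁻ s, ENNReal.ofReal (g s) ∂ℙ) + (∫⁻ s, epos (f s) ∂ℙ) := by
    rw [← lintegral_add_left hmGp]
    exact lintegral_mono fun s => epos_add_le (g s) (f s)
  have hBle : (∫⁻ s, epos (-((g s : EReal) + f s)) ∂ℙ) ≤
      (∫⁻ s, ENNReal.ofReal (-(g s)) ∂ℙ) + (∫⁻ s, epos (-(f s)) ∂ℙ) := by
    rw [← lintegral_add_left hmGm]
    exact lintegral_mono fun s => epos_neg_add_le (g s) (f s)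
  have hint := integral_eq_lintegral_pos_part_sub_lintegral_neg_part hgi
  unfold erealIntegral
  rw [hint]
  exact ereal_arith hGp hGm star hAle hBle hqi

end ErealIntegral

/-! ### Properties of `linUtil` and `SDSCset` -/

lemma measurable_linUtil (μ : Ω → ℝ) (v : A × Ω → ℝ) : Measurable (linUtil μ v) := by
  unfold linUtil
  exact Finset.measurable_sum _ fun aw _ => ((measurable_pi_apply aw).mul_const _).mul_const _

lemma mem01 {P : A × Ω → ℝ} (hP : P ∈ SDSCset A Ω) (aw : A × Ω) :
    0 ≤ P aw ∧ P aw ≤ 1 := by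
  obtain ⟨a, ω⟩ := aw
  have h := hP ω
  refine ⟨h.1 a, ?_⟩
  calc P (a, ω) ≤ ∑ a' : A, P (a', ω) :=
        Finset.single_le_sum (fun i _ => h.1 i) (Finset.mem_univ a)
    _ = 1 := h.2

section Comp

variable {S : Type*} [MeasurableSpace S] (ℙ : Measure S) [IsProbabilityMeasure ℙ]

lemma comp_integrable {P' : S → A × Ω → ℝ} (hm : Measurable P')
    (hmem : ∀ s, P' s ∈ SDSCset A Ω) (aw : A × Ω) :
    Integrable (fun s => P' s aw) ℙ := by
  refine (integrable_const (1 : ℝ)).mono'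
    (((measurable_pi_apply aw).comp hm).aestronglyMeasurable) (ae_of_all _ fun s => ?_)
  rw [Real.norm_eq_abs, abs_of_nonneg (mem01 (hmem s) aw).1]
  exact (mem01 (hmem s) aw).2

lemma lin_comp (μ : Ω → ℝ) (v : A × Ω → ℝ) {P' : S → A × Ω → ℝ} (hm : Measurable P')
    (hmem : ∀ s, P' s ∈ SDSCset A Ω) :
    Integrable (fun s => linUtil μ v (P' s)) ℙ ∧
      ∫ s, linUtil μ v (P' s) ∂ℙ = linUtil μ v (fun aw => ∫ s, P' s aw ∂ℙ) := by
  have heq : ∀ Q : A × Ω → ℝ, linUtil μ v Q = ∑ aw : A × Ω, Q aw * (μ aw.2 * v aw) :=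
    fun Q => Finset.sum_congr rfl fun aw _ => by ring
  have hint : ∀ aw : A × Ω, Integrable (fun s => P' s aw * (μ aw.2 * v aw)) ℙ :=
    fun aw => (comp_integrable ℙ hm hmem aw).mul_const _
  constructor
  · simp only [heq]
    exact integrable_finset_sum _ fun aw _ => hint aw
  · simp only [heq]
    rw [integral_finset_sum _ fun aw _ => hint aw]
    exact Finset.sum_congr rfl fun aw _ => integral_mul_const _ _

end Comp

/-- Aggregation, part ii; Theorem 1(ii) in Allen–Rehbeck
2019. Under the hypotheses of the aggregation theorem, the representative
agent's indirect utility equals the mean of the pointwise maximized value: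
`sup_{P∈𝒫} [Σ P(a|ω)μ(ω)v_{a,ω} + D̄(P)] = ∫ sup_{P∈𝒫} [Σ P(a|ω)μ(ω)v_{a,ω} + c(s,P)] dℙ(s)`. -/
theorem statement10 {S : Type*} [MeasurableSpace S] (ℙ : Measure S)
    [IsProbabilityMeasure ℙ]
    (μ : Ω → ℝ) (hμ : μ ∈ stdSimplex ℝ Ω) (hμpos : ∀ ω, 0 < μ ω)
    (v : A × Ω → ℝ) (c : S → (A × Ω → ℝ) → EReal)
    (hc : ∀ P' : S → A × Ω → ℝ, Measurable P' → (∀ s, P' s ∈ SDSCset A Ω) →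
      Measurable (fun s => c s (P' s)) ∧
      ((∫⁻ s, epos (-(c s (P' s))) ∂ℙ ≠ ⊤) ∨ (∫⁻ s, epos (c s (P' s)) ∂ℙ ≠ ⊤)))
    (Pstar : S → A × Ω → ℝ) (hPmeas : Measurable Pstar)
    (hPmem : ∀ s, Pstar s ∈ SDSCset A Ω)
    (hopt : ∀ᵐ s ∂ℙ, ∀ P ∈ SDSCset A Ω,
      ((linUtil μ v P : ℝ) : EReal) + c s P ≤
      ((linUtil μ v (Pstar s) : ℝ) : EReal) + c s (Pstar s))
    (hsupmeas : Measurable (fun s =>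
      ⨆ P ∈ SDSCset A Ω, (((linUtil μ v P : ℝ) : EReal) + c s P)))
    (hPint : ∀ aw : A × Ω, Integrable (fun s => Pstar s aw) ℙ)
    (hcfin : (∫⁻ s, epos (c s (Pstar s)) ∂ℙ ≠ ⊤) ∧
      (∫⁻ s, epos (-(c s (Pstar s))) ∂ℙ ≠ ⊤)) :
    (⨆ P ∈ SDSCset A Ω, (((linUtil μ v P : ℝ) : EReal) + Dbar ℙ c P)) =
      erealIntegral ℙ (fun s =>
        ⨆ P ∈ SDSCset A Ω, (((linUtil μ v P : ℝ) : EReal) + c s P)) := by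
  classical
  have hlinStar := lin_comp ℙ μ v hPmeas hPmem
  set Pbar : A × Ω → ℝ := fun aw => ∫ s, Pstar s aw ∂ℙ with hPbar_def
  have hPbarmem : Pbar ∈ SDSCset A Ω := by
    intro ω
    constructor
    · intro a
      exact integral_nonneg fun s => (mem01 (hPmem s) (a, ω)).1
    · have h1 : ∑ a : A, Pbar (a, ω) = ∫ s, ∑ a : A, Pstar s (a, ω) ∂ℙ := by
        rw [integral_finset_sum _ fun a _ => hPint (a, ω)]
      rw [h1]
      have h2 : ∀ s, ∑ a : A, Pstar s (a, ω) = 1 := fun s => (hPmem s ω).2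
      simp only [h2]
      simp
  have hcP := hc Pstar hPmeas hPmem
  have hVae : (fun s => ⨆ P ∈ SDSCset A Ω, (((linUtil μ v P : ℝ) : EReal) + c s P)) =ᵐ[ℙ]
      fun s => ((linUtil μ v (Pstar s) : ℝ) : EReal) + c s (Pstar s) :=
    hopt.mono fun s hs => le_antisymm (iSup₂_le fun P hP => hs P hP)
      (le_iSup₂_of_le (Pstar s) (hPmem s) le_rfl)
  have hVint : erealIntegral ℙ
      (fun s => ⨆ P ∈ SDSCset A Ω, (((linUtil μ v P : ℝ) : EReal) + c s P)) =
      ((linUtil μ v Pbar : ℝ) : EReal) + erealIntegral ℙ (fun s => c s (Pstar s)) := by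
    rw [erealIntegral_congr_ae hVae,
      erealIntegral_add_coe (show Measurable fun s => linUtil μ v (Pstar s) from (measurable_linUtil μ v).comp hPmeas) hlinStar.1 hcP.1
        (Or.inl hcfin.2)]
    rw [hlinStar.2]
  rw [hVint]
  refine le_antisymm (iSup₂_le fun P hP => ?_) ?_
  · have key : ∀ I ∈ {I : EReal | ∃ P' : S → A × Ω → ℝ, Measurable P' ∧
        (∀ s, P' s ∈ SDSCset A Ω) ∧ (∀ aw, ∫ s, P' s aw ∂ℙ = P aw) ∧
        I = erealIntegral ℙ (fun s => c s (P' s))},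
        ((linUtil μ v P : ℝ) : EReal) + I ≤
          ((linUtil μ v Pbar : ℝ) : EReal) + erealIntegral ℙ (fun s => c s (Pstar s)) := by
      rintro I ⟨P', hm', hmem', hint', rfl⟩
      have hq := hc P' hm' hmem'
      have hlin' := lin_comp ℙ μ v hm' hmem'
      have heqP : (fun aw => ∫ s, P' s aw ∂ℙ) = P := funext hint'
      have h1 : ((linUtil μ v P : ℝ) : EReal) + erealIntegral ℙ (fun s => c s (P' s)) =
          erealIntegral ℙ (fun s => ((linUtil μ v (P' s) : ℝ) : EReal) + c s (P' s)) := by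
        rw [erealIntegral_add_coe (show Measurable fun s => linUtil μ v (P' s) from (measurable_linUtil μ v).comp hm') hlin'.1 hq.1 hq.2]
        rw [hlin'.2, heqP]
      rw [h1, ← hVint]
      exact erealIntegral_mono fun s => le_iSup₂_of_le (P' s) (hmem' s) le_rfl
    have h1 : Dbar ℙ c P ≤
        (((linUtil μ v Pbar : ℝ) : EReal) + erealIntegral ℙ (fun s => c s (Pstar s))) -
          ((linUtil μ v P : ℝ) : EReal) := by
      unfold Dbar
      refine sSup_le fun I hI => ?_
      refine (EReal.le_sub_iff_add_le (Or.inl (EReal.coe_ne_bot _))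
        (Or.inl (EReal.coe_ne_top _))).mpr ?_
      rw [add_comm]
      exact key I hI
    have h2 := (EReal.le_sub_iff_add_le (Or.inl (EReal.coe_ne_bot _))
      (Or.inl (EReal.coe_ne_top _))).mp h1
    rw [add_comm] at h2
    exact h2
  · have hD : erealIntegral ℙ (fun s => c s (Pstar s)) ≤ Dbar ℙ c Pbar :=
      le_sSup ⟨Pstar, hPmeas, hPmem, fun aw => rfl, rfl⟩
    calc ((linUtil μ v Pbar : ℝ) : EReal) + erealIntegral ℙ (fun s => c s (Pstar s))
        ≤ ((linUtil μ v Pbar : ℝ) : EReal) + Dbar ℙ c Pbar := add_le_add_right hD _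
      _ ≤ ⨆ P ∈ SDSCset A Ω, (((linUtil μ v P : ℝ) : EReal) + Dbar ℙ c P) :=
          le_iSup₂_of_le Pbar hPbarmem le_rfl
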